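/- Let k be a field of characteristic zero, R = MvPolynomial (Fin n) k, b ≥ 1, and let a : Fin n → k determine the maximal ideal m_a generated by the X i − C (a i). Then a polynomial f belongs to m_a^b if and only if every iterated partial derivative of f of total order strictly less than b vanishes at a (i.e., evaluates to 0 under the evaluation map at a). -/

import Mathlib

open MvPolynomial

section Aux

variable {k : Type*} [CommRing k] {n : ℕ}

private lemma aux_coeff_pderiv (i : Fin n) (g : MvPolynomial (Fin n) k) (d : Fin n →₀ ℕ) :
    coeff d (pderiv i g) = (d i + 1) * coeff (d + Finsupp.single i 1) g := by
  induction g using MvPolynomial.induction_on' with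
  | monomial m c =>
    rw [pderiv_monomial, coeff_monomial, coeff_monomial]
    split_ifs with h1 h2 h2
    · subst h2; simp [mul_comm]
    · have hmi : m i = 0 := by
        by_contra hne
        apply h2
        ext j
        have := DFunLike.congr_fun h1 j
        simp only [Finsupp.tsub_apply, Finsupp.coe_add, Pi.add_apply,
          Finsupp.single_apply] at this ⊢
        split_ifs at this ⊢ with hj
        · subst hj; omega
        · omega
      simp [hmi]
    · exfalso; apply h1
      subst h2
      ext j
      simp only [Finsupp.tsub_apply, Finsupp.coe_add, Pi.add_apply, Finsupp.single_apply]
      split_ifs with hj <;> omega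
    · ring
  | add p q hp hq => simp [hp, hq, mul_add]

private lemma aux_toFinsupp_cons {α} [DecidableEq α] (i : α) (s : Multiset α) :
    Multiset.toFinsupp (i ::ₘ s) = Multiset.toFinsupp s + Finsupp.single i 1 := by
  ext j
  simp [Multiset.count_cons, Finsupp.single_apply, eq_comm]

private lemma aux_coeff_foldl_pderiv (l : List (Fin n)) :
    ∀ (g : MvPolynomial (Fin n) k) (d : Fin n →₀ ℕ),
    ∃ c : ℕ, 0 < c ∧
      coeff d (l.foldl (fun g i => pderiv i g) g)
        = c * coeff (d + Multiset.toFinsupp (↑l : Multiset (Fin n))) g := by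
  induction l with
  | nil => intro g d; exact ⟨1, one_pos, by simp⟩
  | cons i l ih =>
    intro g d
    obtain ⟨c, hc, h⟩ := ih (pderiv i g) d
    refine ⟨c * ((d + Multiset.toFinsupp (↑l : Multiset (Fin n))) i + 1), by positivity, ?_⟩
    have hml : ((i :: l : List (Fin n)) : Multiset (Fin n)) = i ::ₘ (↑l : Multiset (Fin n)) := rfl
    rw [List.foldl_cons, h, aux_coeff_pderiv, hml, aux_toFinsupp_cons, ← add_assoc]
    push_cast
    ring

/-- degree of a monomial exponent -/
private noncomputable def mdeg {n : ℕ} (d : Fin n →₀ ℕ) : ℕ :=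
  Multiset.card (Finsupp.toMultiset d)

private lemma mdeg_add (d e : Fin n →₀ ℕ) : mdeg (d + e) = mdeg d + mdeg e := by
  simp [mdeg, Finsupp.toMultiset_add]

private lemma mdeg_eq_zero {d : Fin n →₀ ℕ} (h : mdeg d = 0) : d = 0 := by
  have : Finsupp.toMultiset d = 0 := Multiset.card_eq_zero.mp h
  simpa using congrArg Multiset.toFinsupp this

private lemma aux_monomial_mem_pow (b : ℕ) (d : Fin n →₀ ℕ) (c : k) (hd : b ≤ mdeg d) :
    monomial d c ∈ (Ideal.span (Set.range (X : Fin n → MvPolynomial (Fin n) k))) ^ b := by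
  induction b generalizing d with
  | zero => simp
  | succ b ih =>
    have hd0 : d ≠ 0 := by
      intro h; rw [h] at hd; simp [mdeg] at hd
    obtain ⟨i, hi⟩ : ∃ i, d i ≠ 0 := by
      by_contra h; push_neg at h; exact hd0 (Finsupp.ext h)
    have hsum : Finsupp.single i 1 + (d - Finsupp.single i 1) = d := by
      ext j
      simp only [Finsupp.coe_add, Pi.add_apply, Finsupp.single_apply, Finsupp.tsub_apply]
      split_ifs with hj
      · subst hj; omega
      · omega
    have key : X i * monomial (d - Finsupp.single i 1) c = monomial d c := by
      rw [X, monomial_mul, hsum, one_mul]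
    rw [← key, pow_succ']
    refine Ideal.mul_mem_mul (Ideal.subset_span ⟨i, rfl⟩) (ih _ ?_)
    have h1 : mdeg (Finsupp.single i 1) = 1 := by
      simp [mdeg, Finsupp.toMultiset_single]
    have : mdeg (Finsupp.single i 1) + mdeg (d - Finsupp.single i 1) = mdeg d := by
      rw [← mdeg_add, hsum]
    omega

private lemma aux_mem_span_X_pow_iff (b : ℕ) (f : MvPolynomial (Fin n) k) :
    f ∈ (Ideal.span (Set.range (X : Fin n → MvPolynomial (Fin n) k))) ^ b ↔
      ∀ d : Fin n →₀ ℕ, mdeg d < b → coeff d f = 0 := by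
  constructor
  · induction b generalizing f with
    | zero => intro _ d hd; omega
    | succ b ih =>
      intro hf d hd
      rw [pow_succ'] at hf
      induction hf using Submodule.mul_induction_on' with
      | mem_mul_mem x hx y hy =>
        rw [coeff_mul]
        apply Finset.sum_eq_zero
        rintro ⟨u, v⟩ huv
        rw [Finset.HasAntidiagonal.mem_antidiagonal] at huv
        by_cases hv : mdeg v < b
        · rw [ih y hy v hv, mul_zero]
        · have hdeg : mdeg u + mdeg v = mdeg d := by rw [← mdeg_add, huv]
          have hu : u = 0 := mdeg_eq_zero (by omega)
          subst hu
          have : constantCoeff x = 0 := by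
            have hle : Ideal.span (Set.range (X : Fin n → MvPolynomial (Fin n) k)) ≤
                RingHom.ker (constantCoeff (σ := Fin n) (R := k)) := by
              rw [Ideal.span_le]
              rintro _ ⟨i, rfl⟩
              simp [RingHom.mem_ker]
            simpa [RingHom.mem_ker] using hle hx
          simpa [constantCoeff_eq] using this.symm ▸ (by rw [← constantCoeff_eq, this, zero_mul])
      | add x _ y _ hx hy =>
        rw [coeff_add, hx, hy, add_zero]
  · intro h
    rw [f.as_sum]
    apply Ideal.sum_mem
    intro d hd
    apply aux_monomial_mem_pow
    by_contra hlt
    exact (mem_support_iff.mp hd) (h d (by omega))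

private lemma aux_pderiv_shift (a : Fin n → k) (i : Fin n) (g : MvPolynomial (Fin n) k) :
    pderiv i (aeval (fun j => X j + C (a j)) g)
      = aeval (fun j => X j + C (a j)) (pderiv i g) := by
  induction g using MvPolynomial.induction_on with
  | C c => simp
  | add p q hp hq => simp only [map_add, hp, hq]
  | mul_X p j hp =>
    simp only [map_mul, aeval_X, pderiv_mul, hp, map_add]
    congr 1
    rw [pderiv_C, add_zero]
    cases eq_or_ne j i with
    | inl h => subst h; rw [pderiv_X_self, map_one]
    | inr h => rw [pderiv_X_of_ne h, map_zero]

private lemma aux_foldl_shift (a : Fin n → k) (l : List (Fin n)) :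
    ∀ g : MvPolynomial (Fin n) k,
      l.foldl (fun g i => pderiv i g) (aeval (fun j => X j + C (a j)) g)
        = aeval (fun j => X j + C (a j)) (l.foldl (fun g i => pderiv i g) g) := by
  induction l with
  | nil => intro g; rfl
  | cons i l ih =>
    intro g
    rw [List.foldl_cons, List.foldl_cons, aux_pderiv_shift, ih]

private lemma aux_eval_shift (a : Fin n → k) (g : MvPolynomial (Fin n) k) :
    eval (0 : Fin n → k) (aeval (fun j => X j + C (a j)) g) = eval a g := by
  induction g using MvPolynomial.induction_on with
  | C c => simp
  | add p q hp hq => simp only [map_add, hp, hq]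
  | mul_X p j hp =>
    simp only [map_mul, aeval_X, map_add, hp, eval_X, eval_C, Pi.zero_apply, zero_add]

end Aux

/-- pointwise order criterion via iterated partial derivatives. -/
theorem order_ge_iff_derivatives_vanish
    {k : Type*} [Field k] [CharZero k] (n b : ℕ) (hb : 1 ≤ b)
    (a : Fin n → k) (f : MvPolynomial (Fin n) k) :
    f ∈ (Ideal.span (Set.range fun i : Fin n => X i - C (a i))) ^ b ↔
      ∀ l : List (Fin n), l.length < b →
        eval a (l.foldl (fun g i => pderiv i g) f) = 0 := by
  set φ : MvPolynomial (Fin n) k →ₐ[k] MvPolynomial (Fin n) k :=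
    aeval (fun j => X j + C (a j)) with hφ
  set ψ : MvPolynomial (Fin n) k →ₐ[k] MvPolynomial (Fin n) k :=
    aeval (fun j => X j - C (a j)) with hψ
  have hψφ : ∀ g, ψ (φ g) = g := by
    intro g
    have : ψ.comp φ = AlgHom.id k _ := by
      apply MvPolynomial.algHom_ext
      intro i
      simp [hφ, hψ]
    exact DFunLike.congr_fun this g
  -- step 1: membership transfer
  have himgφ : (⇑φ) '' (Set.range fun i : Fin n => X i - C (a i))
      = Set.range (X : Fin n → MvPolynomial (Fin n) k) := by
    rw [← Set.range_comp]
    have : (⇑φ ∘ fun i : Fin n => X i - C (a i)) = X := by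
      funext i; simp [hφ]
    rw [this]
  have himgψ : (⇑ψ) '' Set.range (X : Fin n → MvPolynomial (Fin n) k)
      = Set.range fun i : Fin n => X i - C (a i) := by
    rw [← Set.range_comp]
    have : (⇑ψ ∘ (X : Fin n → MvPolynomial (Fin n) k)) = fun i : Fin n => X i - C (a i) := by
      funext i; simp [hψ]
    rw [this]
  have hmem : f ∈ (Ideal.span (Set.range fun i : Fin n => X i - C (a i))) ^ b ↔
      φ f ∈ (Ideal.span (Set.range (X : Fin n → MvPolynomial (Fin n) k))) ^ b := by
    constructor
    · intro hf
      have := Ideal.mem_map_of_mem φ hf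
      rwa [Ideal.map_pow, Ideal.map_span, himgφ] at this
    · intro hf
      have := Ideal.mem_map_of_mem ψ hf
      rwa [Ideal.map_pow, Ideal.map_span, himgψ, hψφ f] at this
  rw [hmem, aux_mem_span_X_pow_iff]
  -- step 2: rewrite the evaluation side in terms of φ f
  have heval : ∀ l : List (Fin n),
      eval a (l.foldl (fun g i => pderiv i g) f)
        = coeff 0 (l.foldl (fun g i => pderiv i g) (φ f)) := by
    intro l
    rw [hφ]
    calc eval a (l.foldl (fun g i => pderiv i g) f)
        = eval (0 : Fin n → k)
            (aeval (fun j => X j + C (a j)) (l.foldl (fun g i => pderiv i g) f)) :=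
          (aux_eval_shift a _).symm
      _ = eval (0 : Fin n → k)
            (l.foldl (fun g i => pderiv i g) (aeval (fun j => X j + C (a j)) f)) := by
          rw [aux_foldl_shift]
      _ = coeff 0 (l.foldl (fun g i => pderiv i g) (aeval (fun j => X j + C (a j)) f)) := by
          rw [eval_zero, constantCoeff_eq]
  constructor
  · intro h l hl
    rw [heval l]
    obtain ⟨c, hc, hco⟩ := aux_coeff_foldl_pderiv l (φ f) 0
    rw [hco, h _ ?_, mul_zero]
    have : mdeg (Multiset.toFinsupp (↑l : Multiset (Fin n))) = l.length := by
      simp [mdeg, Multiset.toFinsupp_toMultiset]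
    rw [zero_add]
    omega
  · intro h d hd
    set l : List (Fin n) := (Finsupp.toMultiset d).toList with hl
    have hlen : l.length = mdeg d := by
      simp [hl, mdeg, ← Multiset.coe_card, Multiset.coe_toList]
    have hdl : Multiset.toFinsupp (↑l : Multiset (Fin n)) = d := by
      rw [hl, Multiset.coe_toList, Finsupp.toMultiset_toFinsupp]
    obtain ⟨c, hc, hco⟩ := aux_coeff_foldl_pderiv l f d
    have h0 := h l (by omega)
    rw [heval l] at h0
    obtain ⟨c', hc', hco'⟩ := aux_coeff_foldl_pderiv l (φ f) 0
    rw [hco', hdl, zero_add] at h0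
    have : (c' : k) ≠ 0 := Nat.cast_ne_zero.mpr hc'.ne'
    exact (mul_eq_zero.mp h0).resolve_left this
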